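/- Let P be a d-dimensional lattice polytope. Then for every integer k ≥ d-1, every lattice point of (k+1)P is the sum of a lattice point of P and a lattice point of kP; that is, (k+1)P ∩ M = (P ∩ M) + (kP ∩ M). -/

import Mathlib

open Finset Pointwise

noncomputable section

/-- Lattice points: `ZL N = ℤ^N`. -/
abbrev ZL (N : ℕ) := Fin N → ℤ

/-- Embedding of the lattice into `ℝ^N`. -/
def toR {N : ℕ} (x : ZL N) : Fin N → ℝ := fun i => (x i : ℝ)

/-- The lattice polytope spanned by a finite set `V` of lattice points. -/
def poly {N : ℕ} (V : Finset (ZL N)) : Set (Fin N → ℝ) :=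
  convexHull ℝ (toR '' (V : Set (ZL N)))

/-- The lattice points of the dilate `k • P`. -/
def latPts {N : ℕ} (V : Finset (ZL N)) (k : ℕ) : Set (ZL N) :=
  {x | toR x ∈ (k : ℝ) • poly V}

/-- `P` is `k`-normal: every lattice point of `kP` is a sum of `k` lattice points of `P`. -/
def kNormal {N : ℕ} (V : Finset (ZL N)) (k : ℕ) : Prop :=
  ∀ x ∈ latPts V k, ∃ f : Fin k → ZL N, (∀ i, f i ∈ latPts V 1) ∧ ∑ i, f i = x

/-- `P` is normal. -/
def NormalPoly {N : ℕ} (V : Finset (ZL N)) : Prop := ∀ k, 1 ≤ k → kNormal V k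

/-- The set of which `d_P` is the least element. -/
def dSet {N : ℕ} (V : Finset (ZL N)) : Set ℕ :=
  {n | 0 < n ∧ ∀ k ≥ n, latPts V (k + 1) = latPts V 1 + latPts V k}

/-- The set of which the `k`-normality threshold `k_P` is the least element. -/
def kSet {N : ℕ} (V : Finset (ZL N)) : Set ℕ :=
  {K | 0 < K ∧ ∀ k ≥ K, kNormal V k}

/-- The set of which `ν_P` is the least element. -/
def nuSet {N : ℕ} (V : Finset (ZL N)) : Set ℕ :=
  {n | 0 < n ∧ ∀ k ≥ n, latPts V (k + 1) = (V : Set (ZL N)) + latPts V k}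

/-- `v` is a vertex of `P`. -/
def IsVertex {N : ℕ} (V : Finset (ZL N)) (v : ZL N) : Prop :=
  v ∈ V ∧ toR v ∈ Set.extremePoints ℝ (poly V)

/-- `P` is very ample: for every vertex `v`, every lattice point of the cone
`ℝ_{≥0}(P - v)` is a finite sum of elements `w - v` with `w ∈ P ∩ M`. -/
def VeryAmple {N : ℕ} (V : Finset (ZL N)) : Prop :=
  ∀ v, IsVertex V v → ∀ u : ZL N,
    (∃ c : ℝ, 0 ≤ c ∧ ∃ p ∈ poly V, toR u = c • (p - toR v)) →
    ∃ (m : ℕ) (w : Fin m → ZL N), (∀ i, w i ∈ latPts V 1) ∧ u = ∑ i, (w i - v)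

/-- The set of numbers `m` such that `x - d_P v` is a sum of `m` elements of `(P ∩ M) - v`;
`σ(x, d_P v)` is its least element. -/
def sigmaSet {N : ℕ} (V : Finset (ZL N)) (dP : ℕ) (x v : ZL N) : Set ℕ :=
  {m | ∃ w : Fin m → ZL N, (∀ i, w i ∈ latPts V 1) ∧ x - dP • v = ∑ i, (w i - v)}

/-- The set of all values `σ(x, d_P v)`; `m_P` is its greatest element. -/
def mSet {N : ℕ} (V : Finset (ZL N)) (dP : ℕ) : Set ℕ :=
  {s | ∃ x ∈ latPts V dP, ∃ v, IsVertex V v ∧ IsLeast (sigmaSet V dP x v) s}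

end

section EW

open Finset

variable {N : ℕ}

lemma toR_injective : Function.Injective (toR (N := N)) := by
  intro a b h
  funext i
  have := congrFun h i
  simp only [toR] at this
  exact_mod_cast this

lemma toR_sub (a b : ZL N) : toR (a - b) = toR a - toR b := by
  funext i; simp [toR]

lemma toR_finset_sum (A : Finset (ZL N)) : toR (∑ a ∈ A, a) = ∑ a ∈ A, toR a := by
  funext i
  simp [toR, Finset.sum_apply]

/-- Extract barycentric weights from hull membership. -/
lemma exists_weights {A : Finset (ZL N)} {x : Fin N → ℝ}
    (hx : x ∈ convexHull ℝ (toR '' (A : Set (ZL N)))) :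
    ∃ μ : ZL N → ℝ, (∀ a ∈ A, 0 ≤ μ a) ∧ ∑ a ∈ A, μ a = 1 ∧ ∑ a ∈ A, μ a • toR a = x := by
  classical
  rw [← Finset.coe_image, Finset.convexHull_eq] at hx
  obtain ⟨w, hw0, hw1, hwx⟩ := hx
  have hinj : ∀ a ∈ A, ∀ b ∈ A, toR a = toR b → a = b := fun a _ b _ h => toR_injective h
  refine ⟨fun a => w (toR a), ?_, ?_, ?_⟩
  · exact fun a ha => hw0 _ (Finset.mem_image_of_mem _ ha)
  · rw [← Finset.sum_image (f := w) hinj]; exact hw1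
  · rw [← hwx, Finset.centerMass_eq_of_sum_1 _ _ hw1, Finset.sum_image hinj]
    rfl

/-- Package weights into membership of a dilated hull. -/
lemma mem_smul_hull {A : Finset (ZL N)} (hA : A.Nonempty) {c : ℝ} {μ : ZL N → ℝ}
    (h0 : ∀ a ∈ A, 0 ≤ μ a) (hsum : ∑ a ∈ A, μ a = c) :
    ∑ a ∈ A, μ a • toR a ∈ c • convexHull ℝ (toR '' (A : Set (ZL N))) := by
  classical
  have hc0 : 0 ≤ c := hsum ▸ Finset.sum_nonneg h0
  rcases eq_or_lt_of_le hc0 with hc | hc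
  · have hall : ∀ a ∈ A, μ a = 0 :=
      (Finset.sum_eq_zero_iff_of_nonneg h0).1 (by rw [hsum, ← hc])
    have h1 : ∑ a ∈ A, μ a • toR a = 0 :=
      Finset.sum_eq_zero fun a ha => by rw [hall a ha, zero_smul]
    have hne : (convexHull ℝ (toR '' (A : Set (ZL N)))).Nonempty := by
      obtain ⟨a, ha⟩ := hA
      exact ⟨toR a, subset_convexHull _ _ ⟨a, ha, rfl⟩⟩
    rw [h1, ← hc, Set.zero_smul_set hne]
    exact rfl
  · have hm : A.centerMass μ toR ∈ convexHull ℝ (toR '' (A : Set (ZL N))) :=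
      Finset.centerMass_mem_convexHull A h0 (hsum ▸ hc) fun a ha => ⟨a, ha, rfl⟩
    have := Set.smul_mem_smul_set (a := c) hm
    rwa [Finset.centerMass, hsum, smul_inv_smul₀ hc.ne'] at this

/-- Lattice points in the hull of finitely many lattice points form a finite set. -/
lemma lat_hull_finite (A : Finset (ZL N)) :
    {z : ZL N | toR z ∈ convexHull ℝ (toR '' (A : Set (ZL N)))}.Finite := by
  classical
  set B : ℤ := ∑ a ∈ A, ∑ i, |a i| with hB
  have hBa : ∀ a ∈ A, ∀ i, |a i| ≤ B := by
    intro a ha i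
    calc |a i| ≤ ∑ j, |a j| := Finset.single_le_sum (f := fun j => |a j|) (fun j _ => abs_nonneg _) (Finset.mem_univ i)
    _ ≤ B := Finset.single_le_sum (f := fun a => ∑ j, |a j|)
        (fun b _ => Finset.sum_nonneg fun j _ => abs_nonneg _) ha
  apply Set.Finite.subset (Set.Finite.pi (fun _ : Fin N => Set.finite_Icc (-B) B))
  intro z hz
  obtain ⟨μ, hμ0, hμ1, hμx⟩ := exists_weights hz
  have hzi : ∀ i, |z i| ≤ B := by
    intro i
    have h1 : (z i : ℝ) = ∑ a ∈ A, μ a * (a i : ℝ) := by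
      have := congrFun hμx i
      simpa [toR, Finset.sum_apply] using this.symm
    have h2 : |(z i : ℝ)| ≤ (B : ℝ) := by
      rw [h1]
      calc |∑ a ∈ A, μ a * (a i : ℝ)| ≤ ∑ a ∈ A, |μ a * (a i : ℝ)| :=
            Finset.abs_sum_le_sum_abs _ _
      _ ≤ ∑ a ∈ A, μ a * (B : ℝ) := by
            apply Finset.sum_le_sum
            intro a ha
            rw [abs_mul, abs_of_nonneg (hμ0 a ha)]
            apply mul_le_mul_of_nonneg_left _ (hμ0 a ha)
            rw [← Int.cast_abs]
            exact_mod_cast hBa a ha i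
      _ = (B : ℝ) := by rw [← Finset.sum_mul, hμ1, one_mul]
    rw [← Int.cast_abs] at h2
    exact_mod_cast h2
  intro i _
  simp only [Set.mem_Icc]
  exact abs_le.mp (hzi i)

end EW

section EW2
open Finset
variable {N : ℕ}

lemma ite_smul_sum (A : Finset (ZL N)) {p : ZL N} (hp : p ∈ A) :
    ∑ a ∈ A, (if a = p then (1:ℝ) else 0) • toR a = toR p := by
  simp only [ite_smul, one_smul, zero_smul, Finset.sum_ite_eq', if_pos hp]

lemma ite_sum (A : Finset (ZL N)) {p : ZL N} (hp : p ∈ A) :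
    ∑ a ∈ A, (if a = p then (1:ℝ) else 0) = 1 := by
  simp only [Finset.sum_ite_eq', if_pos hp]

lemma key (V : Finset (ZL N)) (k : ℕ) :
    ∀ n : ℕ, ∀ A : Finset (ZL N),
      {z : ZL N | toR z ∈ convexHull ℝ (toR '' (A : Set (ZL N)))}.ncard ≤ n →
      (∀ a ∈ A, a ∈ latPts V 1) →
      (∀ w : ZL N → ℝ, ∑ a ∈ A, w a = 0 → ∑ a ∈ A, w a • toR a = 0 →
        ∀ a ∈ A, w a = 0) →
      A.card ≤ k + 2 →
      ∀ x : ZL N, toR x ∈ ((k : ℝ) + 1) • convexHull ℝ (toR '' (A : Set (ZL N))) →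
      x ∈ latPts V 1 + latPts V k := by
  classical
  intro n
  induction n with
  | zero =>
    intro A hn hlat _ _ x hx
    exfalso
    rcases A.eq_empty_or_nonempty with rfl | ⟨a, ha⟩
    · simp at hx
    · have hmem : a ∈ {z : ZL N | toR z ∈ convexHull ℝ (toR '' (A : Set (ZL N)))} :=
        subset_convexHull _ _ ⟨a, ha, rfl⟩
      have : 0 < {z : ZL N | toR z ∈ convexHull ℝ (toR '' (A : Set (ZL N)))}.ncard :=
        Set.ncard_pos (lat_hull_finite A) |>.mpr ⟨a, hmem⟩
      omega
  | succ n ih =>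
    intro A hn hlat HAI hcardA x hx
    have hsubPoly : convexHull ℝ (toR '' (A : Set (ZL N))) ⊆ poly V := by
      apply convexHull_min _ (convex_convexHull ℝ _)
      rintro t ⟨a, ha, rfl⟩
      have := hlat a ha
      simpa [latPts, poly] using this
    have hk1 : (0:ℝ) < (k:ℝ) + 1 := by positivity
    obtain ⟨w0, hw0hull, hw0x⟩ := hx
    obtain ⟨μ', hμ'0, hμ'1, hμ'x⟩ := exists_weights hw0hull
    set μ : ZL N → ℝ := fun a => ((k:ℝ)+1) * μ' a with hμdef
    have hμ0 : ∀ a ∈ A, 0 ≤ μ a := fun a ha => mul_nonneg hk1.le (hμ'0 a ha)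
    have hμsum : ∑ a ∈ A, μ a = (k:ℝ)+1 := by
      simp only [hμdef, ← Finset.mul_sum, hμ'1, mul_one]
    have hμx : ∑ a ∈ A, μ a • toR a = toR x := by
      simp only [hμdef, mul_smul, ← Finset.smul_sum, hμ'x]
      exact hw0x
    by_cases hone : ∃ a ∈ A, 1 ≤ μ a
    · -- split off a vertex
      obtain ⟨p, hpA, hp1⟩ := hone
      refine Set.mem_add.mpr ⟨p, hlat p hpA, x - p, ?_, by abel⟩
      show toR (x - p) ∈ ((k:ℕ) : ℝ) • poly V
      have hptw : ∀ a ∈ A, (μ a - if a = p then 1 else 0) • toR a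
          = μ a • toR a - (if a = p then (1:ℝ) else 0) • toR a :=
        fun a _ => sub_smul _ _ _
      have heq : toR (x - p) = ∑ a ∈ A, (μ a - if a = p then 1 else 0) • toR a := by
        rw [Finset.sum_congr rfl hptw, Finset.sum_sub_distrib, hμx, ite_smul_sum A hpA,
          toR_sub]
      have hmem : toR (x - p) ∈ ((k:ℝ)) • convexHull ℝ (toR '' (A : Set (ZL N))) := by
        rw [heq]
        apply mem_smul_hull ⟨p, hpA⟩
        · intro a ha
          split
          · next h => subst h; linarith
          · simpa using hμ0 a ha
        · rw [Finset.sum_sub_distrib, hμsum, ite_sum A hpA]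
          ring
      exact Set.smul_set_mono hsubPoly hmem
    · -- edge case: all weights < 1
      push_neg at hone
      have hAne : A.Nonempty := by
        rcases A.eq_empty_or_nonempty with rfl | h
        · exfalso; simp at hμsum; linarith
        · exact h
      have hcard_gt : ((k:ℝ)+1) < (A.card : ℝ) := by
        calc ((k:ℝ)+1) = ∑ a ∈ A, μ a := hμsum.symm
        _ < ∑ _a ∈ A, (1:ℝ) := Finset.sum_lt_sum_of_nonempty hAne hone
        _ = (A.card : ℝ) := by simp
      have hcardA' : A.card = k + 2 := by
        have : k + 1 < A.card := by exact_mod_cast hcard_gt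
        omega
      have hμpos : ∀ a ∈ A, 0 < μ a := by
        intro a ha
        have h2 : μ a + ∑ b ∈ A.erase a, μ b = (k:ℝ)+1 := by
          rw [Finset.add_sum_erase _ _ ha, hμsum]
        have hene : (A.erase a).Nonempty := by
          rw [← Finset.card_pos, Finset.card_erase_of_mem ha, hcardA']; omega
        have h3 : ∑ b ∈ A.erase a, μ b < ((A.erase a).card : ℝ) := by
          calc ∑ b ∈ A.erase a, μ b < ∑ _b ∈ A.erase a, (1:ℝ) :=
            Finset.sum_lt_sum_of_nonempty hene (fun b hb => hone b (Finset.mem_of_mem_erase hb))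
          _ = _ := by simp
        rw [Finset.card_erase_of_mem ha, hcardA'] at h3
        push_cast at h3
        linarith
      set ν : ZL N → ℝ := fun a => 1 - μ a with hνdef
      have hνpos : ∀ a ∈ A, 0 < ν a := fun a ha => by
        have := hone a ha; simp only [hνdef]; linarith
      set y : ZL N := (∑ a ∈ A, a) - x with hydef
      have hptw2 : ∀ a ∈ A, ν a • toR a = toR a - μ a • toR a := by
        intro a _
        simp only [hνdef]
        rw [sub_smul, one_smul]
      have hyrep : toR y = ∑ a ∈ A, ν a • toR a := by
        rw [Finset.sum_congr rfl hptw2, Finset.sum_sub_distrib, hμx, hydef, toR_sub,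
          toR_finset_sum]
      have hνsum : ∑ a ∈ A, ν a = 1 := by
        have hptw3 : ∀ a ∈ A, ν a = 1 - μ a := fun a _ => rfl
        rw [Finset.sum_congr rfl hptw3, Finset.sum_sub_distrib, hμsum, Finset.sum_const,
          hcardA']
        push_cast; ring
      have hyhull : toR y ∈ convexHull ℝ (toR '' (A : Set (ZL N))) := by
        have := mem_smul_hull hAne (fun a ha => (hνpos a ha).le) hνsum
        rwa [← hyrep, one_smul] at this
      have hyA : y ∉ A := by
        intro hyA
        have hA2 : 1 < A.card := by omega
        obtain ⟨a, haA, hay⟩ := Finset.exists_mem_ne hA2 y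
        have hptw4 : ∀ b ∈ A, (ν b - if b = y then 1 else 0) • toR b
            = ν b • toR b - (if b = y then (1:ℝ) else 0) • toR b :=
          fun b _ => sub_smul _ _ _
        have h0 := HAI (fun b => ν b - if b = y then 1 else 0) ?_ ?_ a haA
        · simp only [if_neg hay, sub_zero] at h0
          have := hνpos a haA; linarith
        · rw [Finset.sum_sub_distrib, hνsum, ite_sum A hyA]
          ring
        · rw [Finset.sum_congr rfl hptw4, Finset.sum_sub_distrib, ← hyrep,
            ite_smul_sum A hyA, sub_self]
      -- choose the minimizing index j
      obtain ⟨j, hjA, hjmin⟩ := A.exists_min_image (fun a => μ a / ν a) hAne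
      set c : ℝ := μ j / ν j with hcdef
      have hc0 : 0 ≤ c := div_nonneg (hμ0 j hjA) (hνpos j hjA).le
      have hcj : c * ν j = μ j := div_mul_cancel₀ _ (hνpos j hjA).ne'
      have hca : ∀ a ∈ A, c * ν a ≤ μ a := by
        intro a ha
        have h := hjmin a ha
        rw [hcdef]
        calc (μ j / ν j) * ν a ≤ (μ a / ν a) * ν a :=
          mul_le_mul_of_nonneg_right h (hνpos a ha).le
        _ = μ a := div_mul_cancel₀ _ (hνpos a ha).ne'
      set A' : Finset (ZL N) := insert y (A.erase j) with hA'def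
      have hyE : y ∉ A.erase j := fun h => hyA (Finset.mem_of_mem_erase h)
      have hA'card : A'.card = k + 2 := by
        rw [hA'def, Finset.card_insert_of_notMem hyE, Finset.card_erase_of_mem hjA, hcardA']
        omega
      have hA'ne : A'.Nonempty := ⟨y, Finset.mem_insert_self _ _⟩
      set w' : ZL N → ℝ := fun b => if b = y then c else μ b - c * ν b with hw'def
      have hw'y : w' y = c := if_pos rfl
      have hw'A : ∀ a ∈ A, w' a = μ a - c * ν a := by
        intro a ha
        apply if_neg
        intro h
        subst h
        exact hyA ha
      have hw'0 : ∀ b ∈ A', 0 ≤ w' b := by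
        intro b hb
        rcases Finset.mem_insert.mp hb with rfl | hbE
        · rw [hw'y]; exact hc0
        · rw [hw'A b (Finset.mem_of_mem_erase hbE)]
          have := hca b (Finset.mem_of_mem_erase hbE); linarith
      have hw'sum : ∑ b ∈ A', w' b = (k:ℝ) + 1 := by
        rw [hA'def, Finset.sum_insert hyE, Finset.sum_erase_eq_sub hjA, hw'y,
          Finset.sum_congr rfl hw'A, Finset.sum_sub_distrib, hμsum, ← Finset.mul_sum,
          hνsum, hw'A j hjA, hcj]
        ring
      have hptw5 : ∀ a ∈ A, w' a • toR a = μ a • toR a - (c * ν a) • toR a :=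
        fun a ha => by rw [hw'A a ha, sub_smul]
      have hptw6 : ∀ a ∈ A, (c * ν a) • toR a = c • ν a • toR a :=
        fun a _ => by rw [smul_smul]
      have hw'x : ∑ b ∈ A', w' b • toR b = toR x := by
        rw [hA'def, Finset.sum_insert hyE,
          Finset.sum_erase_eq_sub (f := fun b => w' b • toR b) hjA, hw'y,
          Finset.sum_congr rfl hptw5, Finset.sum_sub_distrib, hμx,
          Finset.sum_congr rfl hptw6, ← Finset.smul_sum, ← hyrep,
          hw'A j hjA, hcj]
        simp only [sub_self, zero_smul, sub_zero]
        abel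
      have hx' : toR x ∈ ((k:ℝ)+1) • convexHull ℝ (toR '' (A' : Set (ZL N))) := by
        rw [← hw'x]
        exact mem_smul_hull hA'ne hw'0 hw'sum
      -- affine independence of the new simplex
      have hsubst : ∀ w : ZL N → ℝ,
          ∑ b ∈ A', w b • toR b
            = ∑ a ∈ A, ((if a = j then 0 else w a) + w y * ν a) • toR a := by
        intro w
        have hp1 : ∀ a ∈ A, ((if a = j then 0 else w a) + w y * ν a) • toR a
            = (if a = j then (0:ℝ) else w a) • toR a + (w y * ν a) • toR a :=
          fun a _ => add_smul _ _ _
        have hp2 : ∀ a ∈ A, (w y * ν a) • toR a = w y • ν a • toR a :=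
          fun a _ => by rw [smul_smul]
        have hp3 : ∀ b ∈ A.erase j, w b • toR b = (if b = j then (0:ℝ) else w b) • toR b :=
          fun b hb => by rw [if_neg (Finset.ne_of_mem_erase hb)]
        rw [hA'def, Finset.sum_insert hyE, Finset.sum_congr rfl hp3,
          Finset.sum_erase_eq_sub (f := fun b => (if b = j then (0:ℝ) else w b) • toR b) hjA,
          if_pos rfl, zero_smul, sub_zero,
          Finset.sum_congr rfl hp1, Finset.sum_add_distrib,
          Finset.sum_congr rfl hp2, ← Finset.smul_sum, ← hyrep]
        abel
      have hsubstsum : ∀ w : ZL N → ℝ,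
          ∑ a ∈ A, ((if a = j then 0 else w a) + w y * ν a)
            = (∑ b ∈ A', w b) - w y + w y * (∑ a ∈ A, ν a) := by
        intro w
        have hp3 : ∀ b ∈ A.erase j, w b = (if b = j then (0:ℝ) else w b) :=
          fun b hb => by rw [if_neg (Finset.ne_of_mem_erase hb)]
        rw [Finset.sum_add_distrib, ← Finset.mul_sum, hA'def, Finset.sum_insert hyE,
          Finset.sum_congr rfl hp3,
          Finset.sum_erase_eq_sub (f := fun b => (if b = j then (0:ℝ) else w b)) hjA,
          if_pos rfl, sub_zero]
        ring
      have HAI' : ∀ w : ZL N → ℝ, ∑ b ∈ A', w b = 0 → ∑ b ∈ A', w b • toR b = 0 →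
          ∀ b ∈ A', w b = 0 := by
        intro w hsum0 hcomb0
        have husum : ∑ a ∈ A, ((if a = j then 0 else w a) + w y * ν a) = 0 := by
          rw [hsubstsum w, hsum0, hνsum]
          ring
        have hucomb : ∑ a ∈ A, ((if a = j then 0 else w a) + w y * ν a) • toR a = 0 := by
          rw [← hsubst w]; exact hcomb0
        have hu := HAI _ husum hucomb
        have hwy : w y = 0 := by
          have h5 := hu j hjA
          have h6 : w y * ν j = 0 := by simpa using h5
          rcases mul_eq_zero.mp h6 with h | h
          · exact h
          · exact absurd h (hνpos j hjA).ne'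
        intro b hb
        rcases Finset.mem_insert.mp hb with rfl | hbE
        · exact hwy
        · have := hu b (Finset.mem_of_mem_erase hbE)
          rw [if_neg (Finset.ne_of_mem_erase hbE), hwy, zero_mul, add_zero] at this
          exact this
      -- all points of A' are lattice points of P
      have hlat' : ∀ b ∈ A', b ∈ latPts V 1 := by
        intro b hb
        rcases Finset.mem_insert.mp hb with rfl | hbE
        · show toR y ∈ ((1:ℕ):ℝ) • poly V
          rw [Nat.cast_one, one_smul]
          exact hsubPoly hyhull
        · exact hlat b (Finset.mem_of_mem_erase hbE)
      -- the count strictly decreases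
      have hullsub : convexHull ℝ (toR '' (A' : Set (ZL N))) ⊆
          convexHull ℝ (toR '' (A : Set (ZL N))) := by
        apply convexHull_min _ (convex_convexHull ℝ _)
        rintro t ⟨b, hb, rfl⟩
        rcases Finset.mem_insert.mp hb with rfl | hbE
        · exact hyhull
        · exact subset_convexHull _ _ ⟨b, Finset.mem_of_mem_erase hbE, rfl⟩
      have hjnot : toR j ∉ convexHull ℝ (toR '' (A' : Set (ZL N))) := by
        intro hj'
        obtain ⟨w, hw0, hw1, hwx⟩ := exists_weights (A := A') hj'
        have hene : (A.erase j).Nonempty := by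
          rw [← Finset.card_pos, Finset.card_erase_of_mem hjA, hcardA']; omega
        obtain ⟨a0, ha0⟩ := hene
        have ha0A := Finset.mem_of_mem_erase ha0
        have ha0j := Finset.ne_of_mem_erase ha0
        have hptw7 : ∀ a ∈ A,
            (((if a = j then 0 else w a) + w y * ν a) - if a = j then 1 else 0) • toR a
            = ((if a = j then 0 else w a) + w y * ν a) • toR a
              - (if a = j then (1:ℝ) else 0) • toR a :=
          fun a _ => sub_smul _ _ _
        have h0 := HAI
          (fun a => ((if a = j then 0 else w a) + w y * ν a) - if a = j then 1 else 0) ?_ ?_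
        · have e1 := h0 a0 ha0A
          simp only [if_neg ha0j, sub_zero] at e1
          have hwa0 : 0 ≤ w a0 := hw0 a0 (Finset.mem_insert_of_mem ha0)
          have hwyn : 0 ≤ w y := hw0 y (Finset.mem_insert_self _ _)
          have hνa0 := hνpos a0 ha0A
          have hwy0 : w y = 0 := by nlinarith
          have e2 := h0 j hjA
          simp only [if_pos rfl, zero_add, hwy0, zero_mul] at e2
          norm_num at e2
        · rw [Finset.sum_sub_distrib, ite_sum A hjA, hsubstsum w, hw1, hνsum]
          ring
        · rw [Finset.sum_congr rfl hptw7, Finset.sum_sub_distrib, ← hsubst w, hwx,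
            ite_smul_sum A hjA, sub_self]
      have hssub : {z : ZL N | toR z ∈ convexHull ℝ (toR '' (A' : Set (ZL N)))} ⊂
          {z : ZL N | toR z ∈ convexHull ℝ (toR '' (A : Set (ZL N)))} := by
        constructor
        · intro z hz; exact hullsub hz
        · intro h
          exact hjnot (h (subset_convexHull _ _ ⟨j, hjA, rfl⟩ :
            toR j ∈ convexHull ℝ (toR '' (A : Set (ZL N)))))
      have hcount : {z : ZL N | toR z ∈ convexHull ℝ (toR '' (A' : Set (ZL N)))}.ncard <
          {z : ZL N | toR z ∈ convexHull ℝ (toR '' (A : Set (ZL N)))}.ncard :=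
        Set.ncard_lt_ncard hssub (lat_hull_finite A)
      exact ih A' (by omega) hlat' HAI' (le_of_eq hA'card) x hx'

end EW2

/-- For a `d`-dimensional lattice polytope `P`, for every `k ≥ d - 1` one has
`(k+1)P ∩ M = (P ∩ M) + (kP ∩ M)`. -/
theorem stmt1 {N d : ℕ} (V : Finset (ZL N))
    (hdim : Module.finrank ℝ ↥(vectorSpan ℝ (poly V)) = d) :
    ∀ k : ℕ, d - 1 ≤ k →
      latPts V (k + 1) = latPts V 1 + latPts V k := by
  classical
  intro k hk
  have hdk : d ≤ k + 1 := by omega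
  apply Set.Subset.antisymm
  · -- hard inclusion
    intro x hx
    have hx' : toR x ∈ ((k:ℝ) + 1) • convexHull ℝ (toR '' (V : Set (ZL N))) := by
      have : toR x ∈ ((k+1 : ℕ) : ℝ) • poly V := hx
      rwa [poly, Nat.cast_add, Nat.cast_one] at this
    obtain ⟨w0, hw0, hw0x⟩ := hx'
    rw [convexHull_eq_union] at hw0
    simp only [Set.mem_iUnion] at hw0
    obtain ⟨T, hTsub, hTai, hw0T⟩ := hw0
    set A : Finset (ZL N) := V.filter (fun v => toR v ∈ T) with hAdef
    have hAV : ∀ a ∈ A, a ∈ V := fun a ha => (Finset.mem_filter.mp ha).1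
    have himT : A.image toR = T := by
      ext t
      constructor
      · intro ht
        obtain ⟨a, ha, rfl⟩ := Finset.mem_image.mp ht
        exact (Finset.mem_filter.mp ha).2
      · intro ht
        obtain ⟨v, hv, rfl⟩ := hTsub ht
        exact Finset.mem_image_of_mem toR (Finset.mem_filter.mpr ⟨hv, ht⟩)
    have himS : toR '' (A : Set (ZL N)) = (T : Set (Fin N → ℝ)) := by
      rw [← Finset.coe_image, himT]
    -- the retraction from ℝ^N back to the lattice
    set g : (Fin N → ℝ) → ZL N := fun t i => ⌊t i⌋ with hgdef
    have hg : ∀ a : ZL N, g (toR a) = a := by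
      intro a; funext i; simp [hgdef, toR]
    -- affine independence transfer
    have HAI : ∀ w : ZL N → ℝ, ∑ a ∈ A, w a = 0 → ∑ a ∈ A, w a • toR a = 0 →
        ∀ a ∈ A, w a = 0 := by
      intro w hsum hcomb a ha
      have h1 := affineIndependent_iff.mp hTai Finset.univ (fun e => w (g ↑e)) ?_ ?_
        ⟨toR a, himT ▸ Finset.mem_image_of_mem toR ha⟩ (Finset.mem_univ _)
      · simp only [hg] at h1
        exact h1
      · rw [Finset.sum_coe_sort T (fun t => w (g t)), ← himT,
          Finset.sum_image (fun a _ b _ h => toR_injective h)]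
        simp only [hg]
        exact hsum
      · rw [Finset.sum_coe_sort T (fun t => w (g t) • t), ← himT,
          Finset.sum_image (fun a _ b _ h => toR_injective h)]
        simp only [hg]
        exact hcomb
    -- cardinality bound
    have hcard : A.card ≤ k + 2 := by
      have hcardT : A.card = T.card := by rw [← himT, Finset.card_image_of_injective _ toR_injective]
      rcases T.eq_empty_or_nonempty with rfl | hTne
      · simp [hcardT]
      · haveI : Nonempty ↥T := ⟨⟨hTne.choose, hTne.choose_spec⟩⟩
        have h1 : Module.finrank ℝ ↥(vectorSpan ℝ (Set.range ((↑) : T → Fin N → ℝ))) + 1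
            = Fintype.card T := hTai.finrank_vectorSpan_add_one
        have hrange : Set.range ((↑) : T → Fin N → ℝ) = (T : Set (Fin N → ℝ)) :=
          Subtype.range_coe_subtype
        have h2 : vectorSpan ℝ (T : Set (Fin N → ℝ)) ≤ vectorSpan ℝ (poly V) := by
          rw [poly, ← direction_affineSpan, ← direction_affineSpan,
            affineSpan_convexHull]
          exact AffineSubspace.direction_le (affineSpan_mono ℝ hTsub)
        have h3 : Module.finrank ℝ ↥(vectorSpan ℝ (T : Set (Fin N → ℝ))) ≤ d := by
          rw [← hdim]
          exact Submodule.finrank_mono h2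
        rw [hrange] at h1
        have h4 : Fintype.card T = T.card := Fintype.card_coe T
        omega
    -- lattice point hypothesis
    have hlat : ∀ a ∈ A, a ∈ latPts V 1 := by
      intro a ha
      show toR a ∈ ((1:ℕ):ℝ) • poly V
      rw [Nat.cast_one, one_smul]
      exact subset_convexHull _ _ ⟨a, hAV a ha, rfl⟩
    -- membership
    have hxA : toR x ∈ ((k:ℝ) + 1) • convexHull ℝ (toR '' (A : Set (ZL N))) := by
      rw [himS, ← hw0x]
      exact Set.smul_mem_smul_set hw0T
    exact key V k _ A le_rfl hlat HAI hcard x hxA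
  · -- easy inclusion
    rintro x ⟨p, hp, q, hq, rfl⟩
    show toR (p + q) ∈ ((k+1 : ℕ) : ℝ) • poly V
    have hsplit : ((k+1 : ℕ) : ℝ) • poly V = (1:ℝ) • poly V + (k:ℝ) • poly V := by
      rw [show ((k+1:ℕ):ℝ) = 1 + (k:ℝ) by push_cast; ring]
      exact (convex_convexHull ℝ _).add_smul zero_le_one (Nat.cast_nonneg k)
    have htoR : toR (p + q) = toR p + toR q := by funext i; simp [toR]
    rw [hsplit, htoR]
    have hp' : toR p ∈ (1:ℝ) • poly V := by
      have : toR p ∈ ((1:ℕ):ℝ) • poly V := hp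
      rwa [Nat.cast_one] at this
    exact Set.add_mem_add hp' hq
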